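/- The structure coefficients are independent of the number of strategies: fix N, a neutral replacement rule p° satisfying the fixation axiom, u ∈ (0,1], an interaction matrix (ω_{kℓ}), and a replacement-rule family (hence m_k^{ji} and v*_i, which do not depend on n). For each integer n ≥ 3, let φ_ij(n) and φ_ijk(n) be the pairwise and triple identity-by-state probabilities of the neutral chain with n strategies, and let λ̃₁(n), λ̃₂(n), λ̃₃(n) be given by λ̃₁(n) = Σ_{i,j,k} v*_i·m_k^{ji}·Σ_ℓ ω_{kℓ}·[−n²φ_{ikℓ}(n) + n²(1−u)φ_{jkℓ}(n) + nφ_{ik}(n) + nφ_{iℓ}(n) − n(1−u)φ_{jk}(n) − n(1−u)φ_{jℓ}(n) + nuφ_{kℓ}(n) − 2u]/((n−1)(n−2)), λ̃₂(n) = Σ_{i,j,k} v*_i·m_k^{ji}·Σ_ℓ ω_{kℓ}·[−n²φ_{ikℓ}(n) + n²(1−u)φ_{jkℓ}(n) + nφ_{ik}(n) + n(n−1)φ_{iℓ}(n) − n(1−u)φ_{jk}(n) − n(n−1)(1−u)φ_{jℓ}(n) + nuφ_{kℓ}(n) − nu]/((n−1)(n−2)), λ̃₃(n) = Σ_{i,j,k}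 v*_i·m_k^{ji}·Σ_ℓ ω_{kℓ}·[2n²φ_{ikℓ}(n) − 2n²(1−u)φ_{jkℓ}(n) − n²φ_{ik}(n) − n²φ_{iℓ}(n) + n²(1−u)φ_{jk}(n) + n²(1−u)φ_{jℓ}(n) − 2nuφ_{kℓ}(n) + 2nu]/((n−1)(n−2)). Then λ̃_r(n) = λ̃_r(n′) for all integers n, n′ ≥ 3 and each r ∈ {1,2,3}. -/

import Mathlib

open Finset
set_option maxHeartbeats 1000000

namespace SCT

abbrev Event (N : ℕ) := Finset (Fin N) × (Fin N → Fin N)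

/-- The extension `α̃` of the parentage map of a replacement event:
it equals `α` on `R` and the identity off `R`. -/
def extMap {N : ℕ} (E : Event N) : Fin N → Fin N :=
  fun i => if i ∈ E.1 then E.2 i else i

/-- Transition probabilities of the mutation–selection Markov chain on states
`Fin N → Fin n`, for a replacement rule `p` and mutation probability `u`. -/
noncomputable def transMat (N n : ℕ) (p : Event N → ℝ) (u : ℝ)
    (x y : Fin N → Fin n) : ℝ :=
  ∑ E : Event N, p E *
    (∏ i ∈ E.1, ((1 - u) * (if y i = x (E.2 i) then (1:ℝ) else 0) + u / (n:ℝ))) *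
    (∏ i ∈ E.1ᶜ, (if y i = x i then (1:ℝ) else 0))

def IsDist {α : Type*} [Fintype α] (q : α → ℝ) : Prop :=
  (∀ a, 0 ≤ q a) ∧ ∑ a, q a = 1

def IsStationary {N n : ℕ} (P : (Fin N → Fin n) → (Fin N → Fin n) → ℝ)
    (π : (Fin N → Fin n) → ℝ) : Prop :=
  IsDist π ∧ ∀ y, ∑ x, π x * P x y = π y

/-- Fixation axiom: some site `i` can propagate its lineage through the whole
population via finitely many replacement events of positive probability. -/
def FixationAxiom {N : ℕ} (p : Event N → ℝ) : Prop :=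
  ∃ (i : Fin N) (m : ℕ) (E : Fin m → Event N), 1 ≤ m ∧
    (∀ k, 0 < p (E k)) ∧ (∃ k, i ∈ (E k).1) ∧
    ∀ j, ((List.ofFn (fun k => extMap (E k))).foldr (· ∘ ·) id) j = i

/-- Pairwise identity-by-state probability under the distribution `π`. -/
noncomputable def phi2 {N n : ℕ} (π : (Fin N → Fin n) → ℝ) (i j : Fin N) : ℝ :=
  ∑ x, π x * (if x i = x j then (1:ℝ) else 0)

/-- Triple identity-by-state probability under the distribution `π`. -/
noncomputable def phi3 {N n : ℕ} (π : (Fin N → Fin n) → ℝ) (i j k : Fin N) : ℝ :=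
  ∑ x, π x * (if x i = x j ∧ x j = x k then (1:ℝ) else 0)

/-- The probability that `i` replaces `j`, for fecundity vector `F`, under the
replacement-rule family `p`. -/
noncomputable def eRep {N : ℕ} (p : (Fin N → ℝ) → Event N → ℝ) (F : Fin N → ℝ)
    (i j : Fin N) : ℝ :=
  ∑ E ∈ univ.filter (fun E : Event N => j ∈ E.1 ∧ E.2 j = i), p F E

/-- `mCoef p k i j` is the marginal effect `m_k^{ij}` of `k`'s fecundity on the
probability that `i` replaces `j`, evaluated at the all-ones fecundity vector. -/
noncomputable def mCoef {N : ℕ} (p : (Fin N → ℝ) → Event N → ℝ) (k i j : Fin N) : ℝ :=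
  fderiv ℝ (fun F => eRep p F i j) (fun _ => (1:ℝ)) (Pi.single k 1)

/-- Neutral replacement probability `e°_{ij}`. -/
noncomputable def e0 {N : ℕ} (p : (Fin N → ℝ) → Event N → ℝ) (i j : Fin N) : ℝ :=
  eRep p (fun _ => (1:ℝ)) i j

/-- Neutral death probability `d°_i`. -/
noncomputable def d0 {N : ℕ} (p : (Fin N → ℝ) → Event N → ℝ) (i : Fin N) : ℝ :=
  ∑ j, e0 p j i

/-- Ancestral random-walk matrix `A_{ij} := e°_{ji} / d°_i`. -/
noncomputable def Amat {N : ℕ} (p : (Fin N → ℝ) → Event N → ℝ) :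
    Matrix (Fin N) (Fin N) ℝ :=
  Matrix.of fun i j => e0 p j i / d0 p i

/-- Mutation-weighted quantity `μ_i := (1/N)·Σ_j u·(Ã⁻¹)_{ji}` with
`Ã := I − (1−u)A`. -/
noncomputable def muVec {N : ℕ} (p : (Fin N → ℝ) → Event N → ℝ) (u : ℝ) (i : Fin N) : ℝ :=
  (1/(N:ℝ)) * ∑ j, u * ((1 - (1-u) • Amat p)⁻¹ j i)

/-- Mutation-weighted reproductive value `v*_i := μ_i / (u·d°_i)`. -/
noncomputable def vstar {N : ℕ} (p : (Fin N → ℝ) → Event N → ℝ) (u : ℝ) (i : Fin N) : ℝ :=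
  muVec p u i / (u * d0 p i)

/-- Total payoff of site `i` in state `x` for a symmetric matrix game `a` with
interaction structure `ω`. -/
noncomputable def payoffSym {N n : ℕ} (ω : Fin N → Fin N → ℝ) (a : Fin n → Fin n → ℝ)
    (i : Fin N) (x : Fin N → Fin n) : ℝ :=
  ∑ l, ω i l * a (x i) (x l)

/-- Transition probabilities of the mutation–selection chain at selection
intensity `δ` for the symmetric game `(ω, a)`, with fecundities
`F_i(x) = exp(δ·u_i(x))`. -/
noncomputable def PdelSym (N n : ℕ) (p : (Fin N → ℝ) → Event N → ℝ) (u : ℝ)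
    (ω : Fin N → Fin N → ℝ) (a : Fin n → Fin n → ℝ) (δ : ℝ)
    (x y : Fin N → Fin n) : ℝ :=
  transMat N n (p (fun i => Real.exp (δ * payoffSym ω a i x))) u x y

/-- Structure coefficient `λ̃₁`. -/
noncomputable def lamT1 {N : ℕ} (n : ℕ) (p : (Fin N → ℝ) → Event N → ℝ) (u : ℝ)
    (ω : Fin N → Fin N → ℝ) (φ2 : Fin N → Fin N → ℝ)
    (φ3 : Fin N → Fin N → Fin N → ℝ) : ℝ :=
  ∑ i, ∑ j, ∑ k, vstar p u i * mCoef p k j i * ∑ l, ω k l *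
    ((-(n:ℝ)^2 * φ3 i k l + (n:ℝ)^2 * (1-u) * φ3 j k l
      + (n:ℝ) * φ2 i k + (n:ℝ) * φ2 i l
      - (n:ℝ) * (1-u) * φ2 j k - (n:ℝ) * (1-u) * φ2 j l
      + (n:ℝ) * u * φ2 k l - 2*u) / (((n:ℝ) - 1) * ((n:ℝ) - 2)))

/-- Structure coefficient `λ̃₂`. -/
noncomputable def lamT2 {N : ℕ} (n : ℕ) (p : (Fin N → ℝ) → Event N → ℝ) (u : ℝ)
    (ω : Fin N → Fin N → ℝ) (φ2 : Fin N → Fin N → ℝ)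
    (φ3 : Fin N → Fin N → Fin N → ℝ) : ℝ :=
  ∑ i, ∑ j, ∑ k, vstar p u i * mCoef p k j i * ∑ l, ω k l *
    ((-(n:ℝ)^2 * φ3 i k l + (n:ℝ)^2 * (1-u) * φ3 j k l
      + (n:ℝ) * φ2 i k + (n:ℝ) * ((n:ℝ) - 1) * φ2 i l
      - (n:ℝ) * (1-u) * φ2 j k - (n:ℝ) * ((n:ℝ) - 1) * (1-u) * φ2 j l
      + (n:ℝ) * u * φ2 k l - (n:ℝ) * u) / (((n:ℝ) - 1) * ((n:ℝ) - 2)))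

/-- Structure coefficient `λ̃₃`. -/
noncomputable def lamT3 {N : ℕ} (n : ℕ) (p : (Fin N → ℝ) → Event N → ℝ) (u : ℝ)
    (ω : Fin N → Fin N → ℝ) (φ2 : Fin N → Fin N → ℝ)
    (φ3 : Fin N → Fin N → Fin N → ℝ) : ℝ :=
  ∑ i, ∑ j, ∑ k, vstar p u i * mCoef p k j i * ∑ l, ω k l *
    ((2 * (n:ℝ)^2 * φ3 i k l - 2 * (n:ℝ)^2 * (1-u) * φ3 j k l
      - (n:ℝ)^2 * φ2 i k - (n:ℝ)^2 * φ2 i l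
      + (n:ℝ)^2 * (1-u) * φ2 j k + (n:ℝ)^2 * (1-u) * φ2 j l
      - 2 * (n:ℝ) * u * φ2 k l + 2 * (n:ℝ) * u) / (((n:ℝ) - 1) * ((n:ℝ) - 2)))

section Aux
variable {N : ℕ}

lemma key {α β : Type*} [Fintype α] [Fintype β] [DecidableEq α] [DecidableEq β]
    (K : α → β → ℝ) (hK : ∀ s, ∑ v, K s v = 1) (T : Finset α) (c : β) :
    ∑ y : α → β, (∏ s, K s (y s)) * ∏ s ∈ T, (if y s = c then (1:ℝ) else 0)
      = ∏ s ∈ T, K s c := by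
  set G : α → β → ℝ := fun s v => K s v * (if s ∈ T then (if v = c then (1:ℝ) else 0) else 1) with hG
  have h1 : ∀ y : α → β, (∏ s, K s (y s)) * ∏ s ∈ T, (if y s = c then (1:ℝ) else 0)
      = ∏ s, G s (y s) := by
    intro y
    rw [hG]
    simp only
    rw [Finset.prod_mul_distrib]
    congr 1
    rw [Finset.prod_ite_mem]
    simp
  simp only [h1]
  rw [← Fintype.piFinset_univ, Finset.sum_prod_piFinset]
  have h2 : ∀ s, (∑ v, G s v) = if s ∈ T then K s c else 1 := by
    intro s
    by_cases hs : s ∈ T <;> simp [hG, hs, mul_ite, hK s]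
  rw [Finset.prod_congr rfl (fun s _ => h2 s), Finset.prod_ite_mem]
  simp

noncomputable def bet {N : ℕ} (u : ℝ) (E : Event N) (s : Fin N) : ℝ :=
  if s ∈ E.1 then 1 - u else 1

noncomputable def Wt {N : ℕ} (n : ℕ) (u : ℝ) (E : Event N) (x : Fin N → Fin n)
    (s : Fin N) (v : Fin n) : ℝ :=
  bet u E s * (if v = x (extMap E s) then (1:ℝ) else 0) + (1 - bet u E s) / (n:ℝ)

lemma sum_Wt {n : ℕ} (hn : (n:ℝ) ≠ 0) (u : ℝ) (E : Event N) (x : Fin N → Fin n)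
    (s : Fin N) : ∑ v, Wt n u E x s v = 1 := by
  unfold Wt
  rw [Finset.sum_add_distrib]
  simp [mul_ite, Finset.sum_ite_eq', Finset.card_univ]
  field_simp
  ring

lemma transMat_eq (n : ℕ) (p0 : Event N → ℝ) (u : ℝ) (x y : Fin N → Fin n) :
    transMat N n p0 u x y = ∑ E, p0 E * ∏ s, Wt n u E x s (y s) := by
  unfold transMat
  refine Finset.sum_congr rfl fun E _ => ?_
  rw [mul_assoc]
  congr 1
  rw [← Finset.prod_mul_prod_compl E.1]
  congr 1
  · refine Finset.prod_congr rfl fun s hs => ?_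
    simp [Wt, bet, extMap, hs]
  · refine Finset.prod_congr rfl fun s hs => ?_
    have hs' : s ∉ E.1 := by simpa using hs
    simp [Wt, bet, extMap, hs']

lemma ind_pair {n : ℕ} {i j : Fin N} (hij : i ≠ j) (y : Fin N → Fin n) :
    (if y i = y j then (1:ℝ) else 0)
      = ∑ c, ∏ s ∈ ({i, j} : Finset (Fin N)), (if y s = c then (1:ℝ) else 0) := by
  have hp : ∀ c : Fin n, ∏ s ∈ ({i, j} : Finset (Fin N)), (if y s = c then (1:ℝ) else 0)
      = (if y i = c then (1:ℝ) else 0) * (if y j = c then (1:ℝ) else 0) :=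
    fun c => Finset.prod_pair hij
  simp only [hp]
  by_cases h : y i = y j <;> simp [h, ite_and, Finset.sum_ite_eq', eq_comm]

lemma ind_triple {n : ℕ} {i j k : Fin N} (hij : i ≠ j) (hik : i ≠ k) (hjk : j ≠ k)
    (y : Fin N → Fin n) :
    (if y i = y j ∧ y j = y k then (1:ℝ) else 0)
      = ∑ c, ∏ s ∈ ({i, j, k} : Finset (Fin N)), (if y s = c then (1:ℝ) else 0) := by
  have hp : ∀ c : Fin n, ∏ s ∈ ({i, j, k} : Finset (Fin N)), (if y s = c then (1:ℝ) else 0)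
      = (if y i = c then (1:ℝ) else 0) * ((if y j = c then (1:ℝ) else 0)
          * (if y k = c then (1:ℝ) else 0)) := by
    intro c
    rw [Finset.prod_insert (by simp [hij, hik]), Finset.prod_pair hjk]
  simp only [hp]
  by_cases h1 : y i = y j
  · by_cases h2 : y j = y k
    · simp [h1, h2, ite_and, Finset.sum_ite_eq', eq_comm]
    · simp only [h1, h2, and_false, if_false]
      rw [eq_comm]
      rw [Finset.sum_eq_zero]
      intro c _
      by_cases hc : y j = c
      · have : ¬ y k = c := fun hh => h2 (hc.trans hh.symm)
        simp [this]
      · have : ¬ y i = c := fun hh => hc (h1.symm.trans hh)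
        simp [this, hc]
  · simp only [h1, false_and, if_false]
    rw [eq_comm]
    rw [Finset.sum_eq_zero]
    intro c _
    by_cases hc : y i = c
    · have : ¬ y j = c := fun hh => h1 (hc.trans hh.symm)
      simp [this]
    · simp [hc]

lemma inner_pair {n : ℕ} (hn : (n:ℝ) ≠ 0) (u : ℝ) (E : Event N)
    (x : Fin N → Fin n) {i j : Fin N} (hij : i ≠ j) :
    ∑ y : Fin N → Fin n, (∏ s, Wt n u E x s (y s)) * (if y i = y j then (1:ℝ) else 0)
      = ∑ c, Wt n u E x i c * Wt n u E x j c := by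
  calc ∑ y : Fin N → Fin n, (∏ s, Wt n u E x s (y s)) * (if y i = y j then (1:ℝ) else 0)
      = ∑ y : Fin N → Fin n, (∏ s, Wt n u E x s (y s))
          * ∑ c, ∏ s ∈ ({i, j} : Finset (Fin N)), (if y s = c then (1:ℝ) else 0) :=
        Finset.sum_congr rfl fun y _ => by rw [← ind_pair hij y]
    _ = ∑ c, ∑ y : Fin N → Fin n, (∏ s, Wt n u E x s (y s))
          * ∏ s ∈ ({i, j} : Finset (Fin N)), (if y s = c then (1:ℝ) else 0) := by
        simp only [Finset.mul_sum]
        exact Finset.sum_comm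
    _ = ∑ c, ∏ s ∈ ({i, j} : Finset (Fin N)), Wt n u E x s c :=
        Finset.sum_congr rfl fun c _ => key _ (sum_Wt hn u E x) _ c
    _ = ∑ c, Wt n u E x i c * Wt n u E x j c :=
        Finset.sum_congr rfl fun c _ => Finset.prod_pair hij

lemma step_pair {n : ℕ} (hn : (n:ℝ) ≠ 0) (p0 : Event N → ℝ) (u : ℝ)
    (x : Fin N → Fin n) {i j : Fin N} (hij : i ≠ j) :
    ∑ y, transMat N n p0 u x y * (if y i = y j then (1:ℝ) else 0)
      = ∑ E, p0 E * ∑ c, Wt n u E x i c * Wt n u E x j c := by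
  simp only [transMat_eq, Finset.sum_mul]
  rw [Finset.sum_comm]
  refine Finset.sum_congr rfl fun E _ => ?_
  rw [← inner_pair hn u E x hij, Finset.mul_sum]
  exact Finset.sum_congr rfl fun y _ => by ring


lemma inner_triple {n : ℕ} (hn : (n:ℝ) ≠ 0) (u : ℝ) (E : Event N)
    (x : Fin N → Fin n) {i j k : Fin N} (hij : i ≠ j) (hik : i ≠ k) (hjk : j ≠ k) :
    ∑ y : Fin N → Fin n, (∏ s, Wt n u E x s (y s))
        * (if y i = y j ∧ y j = y k then (1:ℝ) else 0)
      = ∑ c, Wt n u E x i c * (Wt n u E x j c * Wt n u E x k c) := by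
  calc ∑ y : Fin N → Fin n, (∏ s, Wt n u E x s (y s))
        * (if y i = y j ∧ y j = y k then (1:ℝ) else 0)
      = ∑ y : Fin N → Fin n, (∏ s, Wt n u E x s (y s))
          * ∑ c, ∏ s ∈ ({i, j, k} : Finset (Fin N)), (if y s = c then (1:ℝ) else 0) :=
        Finset.sum_congr rfl fun y _ => by rw [← ind_triple hij hik hjk y]
    _ = ∑ c, ∑ y : Fin N → Fin n, (∏ s, Wt n u E x s (y s))
          * ∏ s ∈ ({i, j, k} : Finset (Fin N)), (if y s = c then (1:ℝ) else 0) := by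
        simp only [Finset.mul_sum]
        exact Finset.sum_comm
    _ = ∑ c, ∏ s ∈ ({i, j, k} : Finset (Fin N)), Wt n u E x s c :=
        Finset.sum_congr rfl fun c _ => key _ (sum_Wt hn u E x) _ c
    _ = ∑ c, Wt n u E x i c * (Wt n u E x j c * Wt n u E x k c) := by
        refine Finset.sum_congr rfl fun c _ => ?_
        rw [Finset.prod_insert (by simp [hij, hik]), Finset.prod_pair hjk]

lemma step_triple {n : ℕ} (hn : (n:ℝ) ≠ 0) (p0 : Event N → ℝ) (u : ℝ)
    (x : Fin N → Fin n) {i j k : Fin N} (hij : i ≠ j) (hik : i ≠ k) (hjk : j ≠ k) :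
    ∑ y, transMat N n p0 u x y * (if y i = y j ∧ y j = y k then (1:ℝ) else 0)
      = ∑ E, p0 E * ∑ c, Wt n u E x i c * (Wt n u E x j c * Wt n u E x k c) := by
  simp only [transMat_eq, Finset.sum_mul]
  rw [Finset.sum_comm]
  refine Finset.sum_congr rfl fun E _ => ?_
  rw [← inner_triple hn u E x hij hik hjk, Finset.mul_sum]
  exact Finset.sum_congr rfl fun y _ => by ring


lemma sum_ind {n : ℕ} (A : Fin n) :
    ∑ c : Fin n, (if c = A then (1:ℝ) else 0) = 1 := by simp

lemma sum_ind_mul {n : ℕ} (A B : Fin n) :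
    ∑ c : Fin n, (if c = A then (1:ℝ) else 0) * (if c = B then (1:ℝ) else 0)
      = if A = B then (1:ℝ) else 0 := by
  have hpt : ∀ c : Fin n, (if c = A then (1:ℝ) else 0) * (if c = B then (1:ℝ) else 0)
      = if c = A then (if A = B then (1:ℝ) else 0) else 0 := by
    intro c
    by_cases h1 : c = A
    · subst h1
      by_cases h2 : c = B
      · subst h2; simp
      · simp [h2]
    · simp [h1]
  rw [Finset.sum_congr rfl fun c _ => hpt c]
  simp

lemma sum_ind_mul3 {n : ℕ} (A B C : Fin n) :
    ∑ c : Fin n, (if c = A then (1:ℝ) else 0) * ((if c = B then (1:ℝ) else 0)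
        * (if c = C then (1:ℝ) else 0))
      = if A = B ∧ B = C then (1:ℝ) else 0 := by
  have hpt : ∀ c : Fin n, (if c = A then (1:ℝ) else 0) * ((if c = B then (1:ℝ) else 0)
        * (if c = C then (1:ℝ) else 0))
      = if c = A then (if A = B ∧ B = C then (1:ℝ) else 0) else 0 := by
    intro c
    by_cases h1 : c = A
    · subst h1
      by_cases h2 : c = B
      · subst h2
        by_cases h3 : c = C
        · subst h3; simp
        · simp [h3]
      · simp [h2]
    · simp [h1]
  rw [Finset.sum_congr rfl fun c _ => hpt c]
  simp

lemma card_fin_real {n : ℕ} : ((Fintype.card (Fin n) : ℝ)) = (n:ℝ) := by simp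

lemma sumWW {n : ℕ} (hn : (n:ℝ) ≠ 0) (u : ℝ) (E : Event N) (x : Fin N → Fin n)
    (i j : Fin N) :
    ∑ c, Wt n u E x i c * Wt n u E x j c
      = bet u E i * bet u E j
          * (if x (extMap E i) = x (extMap E j) then (1:ℝ) else 0)
        + (1 - bet u E i * bet u E j) / (n:ℝ) := by
  have expand : ∀ c : Fin n, Wt n u E x i c * Wt n u E x j c
      = bet u E i * bet u E j * ((if c = x (extMap E i) then (1:ℝ) else 0)
          * (if c = x (extMap E j) then (1:ℝ) else 0))
        + (bet u E i * ((1 - bet u E j)/(n:ℝ))) * (if c = x (extMap E i) then (1:ℝ) else 0)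
        + (bet u E j * ((1 - bet u E i)/(n:ℝ))) * (if c = x (extMap E j) then (1:ℝ) else 0)
        + ((1 - bet u E i) * (1 - bet u E j))/(n:ℝ)^2 := by
    intro c
    unfold Wt
    generalize (if c = x (extMap E i) then (1:ℝ) else 0) = Ia
    generalize (if c = x (extMap E j) then (1:ℝ) else 0) = Ib
    field_simp
    ring
  rw [Finset.sum_congr rfl fun c _ => expand c]
  simp only [Finset.sum_add_distrib, ← Finset.mul_sum, Finset.sum_const, Finset.card_univ,
    nsmul_eq_mul, sum_ind_mul, sum_ind, card_fin_real]
  generalize (if x (extMap E i) = x (extMap E j) then (1:ℝ) else 0) = I2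
  field_simp
  ring

lemma sumWWW {n : ℕ} (hn : (n:ℝ) ≠ 0) (u : ℝ) (E : Event N) (x : Fin N → Fin n)
    (i j k : Fin N) :
    ∑ c, Wt n u E x i c * (Wt n u E x j c * Wt n u E x k c)
      = bet u E i * bet u E j * bet u E k
          * (if x (extMap E i) = x (extMap E j) ∧ x (extMap E j) = x (extMap E k)
              then (1:ℝ) else 0)
        + bet u E i * bet u E j * (1 - bet u E k) / (n:ℝ)
          * (if x (extMap E i) = x (extMap E j) then (1:ℝ) else 0)
        + bet u E i * (1 - bet u E j) * bet u E k / (n:ℝ)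
          * (if x (extMap E i) = x (extMap E k) then (1:ℝ) else 0)
        + (1 - bet u E i) * bet u E j * bet u E k / (n:ℝ)
          * (if x (extMap E j) = x (extMap E k) then (1:ℝ) else 0)
        + (bet u E i * (1 - bet u E j) * (1 - bet u E k)
            + (1 - bet u E i) * bet u E j * (1 - bet u E k)
            + (1 - bet u E i) * (1 - bet u E j) * bet u E k
            + (1 - bet u E i) * (1 - bet u E j) * (1 - bet u E k)) / (n:ℝ)^2 := by
  have expand : ∀ c : Fin n, Wt n u E x i c * (Wt n u E x j c * Wt n u E x k c)
      = bet u E i * bet u E j * bet u E k * ((if c = x (extMap E i) then (1:ℝ) else 0)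
          * ((if c = x (extMap E j) then (1:ℝ) else 0)
            * (if c = x (extMap E k) then (1:ℝ) else 0)))
        + (bet u E i * bet u E j * (1 - bet u E k) / (n:ℝ))
          * ((if c = x (extMap E i) then (1:ℝ) else 0)
            * (if c = x (extMap E j) then (1:ℝ) else 0))
        + (bet u E i * (1 - bet u E j) * bet u E k / (n:ℝ))
          * ((if c = x (extMap E i) then (1:ℝ) else 0)
            * (if c = x (extMap E k) then (1:ℝ) else 0))
        + ((1 - bet u E i) * bet u E j * bet u E k / (n:ℝ))
          * ((if c = x (extMap E j) then (1:ℝ) else 0)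
            * (if c = x (extMap E k) then (1:ℝ) else 0))
        + (bet u E i * (1 - bet u E j) * (1 - bet u E k) / (n:ℝ)^2)
          * (if c = x (extMap E i) then (1:ℝ) else 0)
        + ((1 - bet u E i) * bet u E j * (1 - bet u E k) / (n:ℝ)^2)
          * (if c = x (extMap E j) then (1:ℝ) else 0)
        + ((1 - bet u E i) * (1 - bet u E j) * bet u E k / (n:ℝ)^2)
          * (if c = x (extMap E k) then (1:ℝ) else 0)
        + ((1 - bet u E i) * (1 - bet u E j) * (1 - bet u E k)) / (n:ℝ)^3 := by
    intro c
    unfold Wt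
    generalize (if c = x (extMap E i) then (1:ℝ) else 0) = Ia
    generalize (if c = x (extMap E j) then (1:ℝ) else 0) = Ib
    generalize (if c = x (extMap E k) then (1:ℝ) else 0) = Ic
    field_simp
    ring
  rw [Finset.sum_congr rfl fun c _ => expand c]
  simp only [Finset.sum_add_distrib, ← Finset.mul_sum, Finset.sum_const, Finset.card_univ,
    nsmul_eq_mul, sum_ind_mul3, sum_ind_mul, sum_ind, card_fin_real]
  generalize (if x (extMap E i) = x (extMap E j) ∧ x (extMap E j) = x (extMap E k)
      then (1:ℝ) else 0) = I3
  generalize (if x (extMap E i) = x (extMap E j) then (1:ℝ) else 0) = Iab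
  generalize (if x (extMap E i) = x (extMap E k) then (1:ℝ) else 0) = Iac
  generalize (if x (extMap E j) = x (extMap E k) then (1:ℝ) else 0) = Ibc
  field_simp
  ring


lemma bet_nonneg {u : ℝ} (hu1 : u ≤ 1) (E : Event N) (s : Fin N) : 0 ≤ bet u E s := by
  unfold bet; split <;> linarith

lemma bet_le_one {u : ℝ} (hu0 : 0 ≤ u) (E : Event N) (s : Fin N) : bet u E s ≤ 1 := by
  unfold bet; split <;> linarith

lemma bet_pair_le {u : ℝ} (hu0 : 0 ≤ u) (hu1 : u ≤ 1) {E : Event N} {i j : Fin N}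
    (hmem : i ∈ E.1 ∨ j ∈ E.1) : bet u E i * bet u E j ≤ 1 - u := by
  have h0i := bet_nonneg hu1 E i
  have h0j := bet_nonneg hu1 E j
  have h1i := bet_le_one hu0 E i
  have h1j := bet_le_one hu0 E j
  rcases hmem with h | h
  · have : bet u E i = 1 - u := if_pos h
    nlinarith
  · have : bet u E j = 1 - u := if_pos h
    nlinarith

lemma bet_triple_le {u : ℝ} (hu0 : 0 ≤ u) (hu1 : u ≤ 1) {E : Event N} {i j k : Fin N}
    (hmem : i ∈ E.1 ∨ j ∈ E.1) : bet u E i * bet u E j * bet u E k ≤ 1 - u := by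
  have h2 := bet_pair_le hu0 hu1 hmem
  have h0i := bet_nonneg hu1 E i
  have h0j := bet_nonneg hu1 E j
  have h0k := bet_nonneg hu1 E k
  have h1k := bet_le_one hu0 E k
  nlinarith

lemma phi2_self {n : ℕ} {π : (Fin N → Fin n) → ℝ} (hπ1 : ∑ x, π x = 1) (i : Fin N) :
    phi2 π i i = 1 := by
  unfold phi2
  simp [hπ1]

lemma phi2_symm {n : ℕ} (π : (Fin N → Fin n) → ℝ) (i j : Fin N) :
    phi2 π i j = phi2 π j i := by
  unfold phi2
  refine Finset.sum_congr rfl fun x _ => ?_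
  rcases eq_or_ne (x i) (x j) with h | h
  · rw [if_pos h, if_pos h.symm]
  · rw [if_neg h, if_neg (Ne.symm h)]

lemma phi3_jj {n : ℕ} (π : (Fin N → Fin n) → ℝ) (i j : Fin N) :
    phi3 π i j j = phi2 π i j := by
  unfold phi3 phi2
  exact Finset.sum_congr rfl fun x _ => by simp

lemma phi3_ii {n : ℕ} (π : (Fin N → Fin n) → ℝ) (i k : Fin N) :
    phi3 π i i k = phi2 π i k := by
  unfold phi3 phi2
  exact Finset.sum_congr rfl fun x _ => by simp

lemma phi3_iji {n : ℕ} (π : (Fin N → Fin n) → ℝ) (i j : Fin N) :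
    phi3 π i j i = phi2 π i j := by
  unfold phi3 phi2
  refine Finset.sum_congr rfl fun x _ => ?_
  rcases eq_or_ne (x i) (x j) with h | h
  · rw [if_pos ⟨h, h.symm⟩, if_pos h]
  · rw [if_neg (fun hh => h hh.1), if_neg h]

lemma exp_swap {n : ℕ} (π : (Fin N → Fin n) → ℝ) (hπ1 : ∑ x, π x = 1)
    (F A B : Event N → ℝ) (I : Event N → (Fin N → Fin n) → ℝ) :
    ∑ x, π x * ∑ E, F E * (A E * I E x + B E)
      = ∑ E, F E * (A E * (∑ x, π x * I E x) + B E) := by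
  rw [show (∑ x, π x * ∑ E, F E * (A E * I E x + B E))
      = ∑ x, ∑ E, π x * (F E * (A E * I E x + B E)) from
    Finset.sum_congr rfl fun x _ => Finset.mul_sum _ _ _]
  rw [Finset.sum_comm]
  refine Finset.sum_congr rfl fun E _ => ?_
  calc ∑ x, π x * (F E * (A E * I E x + B E))
      = ∑ x, ((F E * A E) * (π x * I E x) + (F E * B E) * π x) :=
        Finset.sum_congr rfl fun x _ => by ring
    _ = (∑ x, (F E * A E) * (π x * I E x)) + ∑ x, (F E * B E) * π x :=
        Finset.sum_add_distrib
    _ = (F E * A E) * (∑ x, π x * I E x) + (F E * B E) * (∑ x, π x) := by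
        rw [← Finset.mul_sum, ← Finset.mul_sum]
    _ = F E * (A E * (∑ x, π x * I E x) + B E) := by rw [hπ1]; ring

lemma exp_swap4 {n : ℕ} (π : (Fin N → Fin n) → ℝ) (hπ1 : ∑ x, π x = 1)
    (F A1 A2 A3 A4 B : Event N → ℝ) (I1 I2 I3 I4 : Event N → (Fin N → Fin n) → ℝ) :
    ∑ x, π x * ∑ E, F E * (A1 E * I1 E x + A2 E * I2 E x + A3 E * I3 E x
        + A4 E * I4 E x + B E)
      = ∑ E, F E * (A1 E * (∑ x, π x * I1 E x) + A2 E * (∑ x, π x * I2 E x)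
          + A3 E * (∑ x, π x * I3 E x) + A4 E * (∑ x, π x * I4 E x) + B E) := by
  rw [show (∑ x, π x * ∑ E, F E * (A1 E * I1 E x + A2 E * I2 E x + A3 E * I3 E x
        + A4 E * I4 E x + B E))
      = ∑ x, ∑ E, π x * (F E * (A1 E * I1 E x + A2 E * I2 E x + A3 E * I3 E x
        + A4 E * I4 E x + B E)) from
    Finset.sum_congr rfl fun x _ => Finset.mul_sum _ _ _]
  rw [Finset.sum_comm]
  refine Finset.sum_congr rfl fun E _ => ?_
  calc ∑ x, π x * (F E * (A1 E * I1 E x + A2 E * I2 E x + A3 E * I3 E x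
          + A4 E * I4 E x + B E))
      = ∑ x, ((F E * A1 E) * (π x * I1 E x) + ((F E * A2 E) * (π x * I2 E x)
          + ((F E * A3 E) * (π x * I3 E x) + ((F E * A4 E) * (π x * I4 E x)
          + (F E * B E) * π x)))) :=
        Finset.sum_congr rfl fun x _ => by ring
    _ = (∑ x, (F E * A1 E) * (π x * I1 E x)) + ((∑ x, (F E * A2 E) * (π x * I2 E x))
          + ((∑ x, (F E * A3 E) * (π x * I3 E x)) + ((∑ x, (F E * A4 E) * (π x * I4 E x))
          + ∑ x, (F E * B E) * π x))) := by
        rw [Finset.sum_add_distrib, Finset.sum_add_distrib, Finset.sum_add_distrib,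
          Finset.sum_add_distrib]
    _ = (F E * A1 E) * (∑ x, π x * I1 E x) + ((F E * A2 E) * (∑ x, π x * I2 E x)
          + ((F E * A3 E) * (∑ x, π x * I3 E x) + ((F E * A4 E) * (∑ x, π x * I4 E x)
          + (F E * B E) * (∑ x, π x)))) := by
        rw [← Finset.mul_sum, ← Finset.mul_sum, ← Finset.mul_sum, ← Finset.mul_sum,
          ← Finset.mul_sum]
    _ = _ := by rw [hπ1]; ring

lemma phi2_rec {n : ℕ} (hn : (n:ℝ) ≠ 0) (p0 : Event N → ℝ) (u : ℝ)
    (π : (Fin N → Fin n) → ℝ) (hπ : IsStationary (transMat N n p0 u) π)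
    {i j : Fin N} (hij : i ≠ j) :
    phi2 π i j = ∑ E, p0 E * (bet u E i * bet u E j
        * phi2 π (extMap E i) (extMap E j)
      + (1 - bet u E i * bet u E j) / (n:ℝ)) := by
  have h1 : phi2 π i j
      = ∑ x, π x * ∑ E, p0 E * (bet u E i * bet u E j
          * (if x (extMap E i) = x (extMap E j) then (1:ℝ) else 0)
          + (1 - bet u E i * bet u E j) / (n:ℝ)) := by
    calc phi2 π i j
        = ∑ y, (∑ x, π x * transMat N n p0 u x y) * (if y i = y j then (1:ℝ) else 0) := by
          refine Finset.sum_congr rfl fun y _ => ?_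
          rw [hπ.2 y]
      _ = ∑ x, π x * ∑ y, transMat N n p0 u x y * (if y i = y j then (1:ℝ) else 0) := by
          simp only [Finset.sum_mul, Finset.mul_sum, mul_assoc]
          exact Finset.sum_comm
      _ = _ := by
          refine Finset.sum_congr rfl fun x _ => ?_
          rw [step_pair hn p0 u x hij]
          exact congrArg (fun z => π x * z)
            (Finset.sum_congr rfl fun E _ => by rw [sumWW hn])
  rw [h1]
  exact exp_swap π hπ.1.2 _ _ _ _

lemma phi3_rec {n : ℕ} (hn : (n:ℝ) ≠ 0) (p0 : Event N → ℝ) (u : ℝ)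
    (π : (Fin N → Fin n) → ℝ) (hπ : IsStationary (transMat N n p0 u) π)
    {i j k : Fin N} (hij : i ≠ j) (hik : i ≠ k) (hjk : j ≠ k) :
    phi3 π i j k = ∑ E, p0 E * (bet u E i * bet u E j * bet u E k
        * phi3 π (extMap E i) (extMap E j) (extMap E k)
      + bet u E i * bet u E j * (1 - bet u E k) / (n:ℝ)
        * phi2 π (extMap E i) (extMap E j)
      + bet u E i * (1 - bet u E j) * bet u E k / (n:ℝ)
        * phi2 π (extMap E i) (extMap E k)
      + (1 - bet u E i) * bet u E j * bet u E k / (n:ℝ)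
        * phi2 π (extMap E j) (extMap E k)
      + (bet u E i * (1 - bet u E j) * (1 - bet u E k)
          + (1 - bet u E i) * bet u E j * (1 - bet u E k)
          + (1 - bet u E i) * (1 - bet u E j) * bet u E k
          + (1 - bet u E i) * (1 - bet u E j) * (1 - bet u E k)) / (n:ℝ)^2) := by
  have h1 : phi3 π i j k
      = ∑ x, π x * ∑ E, p0 E * (bet u E i * bet u E j * bet u E k
          * (if x (extMap E i) = x (extMap E j) ∧ x (extMap E j) = x (extMap E k)
              then (1:ℝ) else 0)
        + bet u E i * bet u E j * (1 - bet u E k) / (n:ℝ)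
          * (if x (extMap E i) = x (extMap E j) then (1:ℝ) else 0)
        + bet u E i * (1 - bet u E j) * bet u E k / (n:ℝ)
          * (if x (extMap E i) = x (extMap E k) then (1:ℝ) else 0)
        + (1 - bet u E i) * bet u E j * bet u E k / (n:ℝ)
          * (if x (extMap E j) = x (extMap E k) then (1:ℝ) else 0)
        + (bet u E i * (1 - bet u E j) * (1 - bet u E k)
            + (1 - bet u E i) * bet u E j * (1 - bet u E k)
            + (1 - bet u E i) * (1 - bet u E j) * bet u E k
            + (1 - bet u E i) * (1 - bet u E j) * (1 - bet u E k)) / (n:ℝ)^2) := by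
    calc phi3 π i j k
        = ∑ y, (∑ x, π x * transMat N n p0 u x y)
            * (if y i = y j ∧ y j = y k then (1:ℝ) else 0) := by
          refine Finset.sum_congr rfl fun y _ => ?_
          rw [hπ.2 y]
      _ = ∑ x, π x * ∑ y, transMat N n p0 u x y
            * (if y i = y j ∧ y j = y k then (1:ℝ) else 0) := by
          simp only [Finset.sum_mul, Finset.mul_sum, mul_assoc]
          exact Finset.sum_comm
      _ = _ := by
          refine Finset.sum_congr rfl fun x _ => ?_
          rw [step_triple hn p0 u x hij hik hjk]
          exact congrArg (fun z => π x * z)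
            (Finset.sum_congr rfl fun E _ => by rw [sumWWW hn])
  rw [h1]
  exact exp_swap4 π hπ.1.2 _ _ _ _ _ _ _ _ _ _

/-- Pair identity-by-descent-like quantity. -/
noncomputable def gq {N : ℕ} (n : ℕ) (π : (Fin N → Fin n) → ℝ) (i j : Fin N) : ℝ :=
  ((n:ℝ) * phi2 π i j - 1) / ((n:ℝ) - 1)

/-- Triple identity-by-descent-like quantity. -/
noncomputable def psiq {N : ℕ} (n : ℕ) (π : (Fin N → Fin n) → ℝ) (i j k : Fin N) : ℝ :=
  ((n:ℝ)^2 * phi3 π i j k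
    - (n:ℝ) * (phi2 π i j + phi2 π i k + phi2 π j k) + 2)
  / (((n:ℝ) - 1) * ((n:ℝ) - 2))

lemma gq_self {n : ℕ} (hn1 : (n:ℝ) - 1 ≠ 0) {π : (Fin N → Fin n) → ℝ}
    (hπ1 : ∑ x, π x = 1) (i : Fin N) : gq n π i i = 1 := by
  unfold gq
  rw [phi2_self hπ1]
  field_simp

lemma psiq_jj {n : ℕ} (hn1 : (n:ℝ) - 1 ≠ 0) (hn2 : (n:ℝ) - 2 ≠ 0)
    {π : (Fin N → Fin n) → ℝ} (hπ1 : ∑ x, π x = 1) (i j : Fin N) :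
    psiq n π i j j = gq n π i j := by
  unfold psiq gq
  rw [phi3_jj, phi2_self hπ1]
  field_simp
  ring

lemma psiq_ii {n : ℕ} (hn1 : (n:ℝ) - 1 ≠ 0) (hn2 : (n:ℝ) - 2 ≠ 0)
    {π : (Fin N → Fin n) → ℝ} (hπ1 : ∑ x, π x = 1) (i k : Fin N) :
    psiq n π i i k = gq n π i k := by
  unfold psiq gq
  rw [phi3_ii, phi2_self hπ1]
  field_simp
  ring

lemma psiq_iji {n : ℕ} (hn1 : (n:ℝ) - 1 ≠ 0) (hn2 : (n:ℝ) - 2 ≠ 0)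
    {π : (Fin N → Fin n) → ℝ} (hπ1 : ∑ x, π x = 1) (i j : Fin N) :
    psiq n π i j i = gq n π i j := by
  unfold psiq gq
  rw [phi3_iji, phi2_self hπ1, phi2_symm π j i]
  field_simp
  ring

lemma gq_rec {n : ℕ} (hn : (n:ℝ) ≠ 0) (hn1 : (n:ℝ) - 1 ≠ 0) (p0 : Event N → ℝ)
    (hq1 : ∑ E, p0 E = 1) (u : ℝ)
    (π : (Fin N → Fin n) → ℝ) (hπ : IsStationary (transMat N n p0 u) π)
    {i j : Fin N} (hij : i ≠ j) :
    gq n π i j = ∑ E, p0 E * (bet u E i * bet u E j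
        * gq n π (extMap E i) (extMap E j)) := by
  have h2 := phi2_rec hn p0 u π hπ hij
  have key : ∀ E : Event N, p0 E * (bet u E i * bet u E j
        * gq n π (extMap E i) (extMap E j))
      = ((n:ℝ) * (p0 E * (bet u E i * bet u E j
            * phi2 π (extMap E i) (extMap E j)
          + (1 - bet u E i * bet u E j) / (n:ℝ))) - p0 E) / ((n:ℝ) - 1) := by
    intro E
    unfold gq
    field_simp
    ring
  rw [Finset.sum_congr rfl fun E _ => key E, ← Finset.sum_div,
    Finset.sum_sub_distrib, ← Finset.mul_sum, hq1, ← h2]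
  rfl

lemma psiq_rec {n : ℕ} (hn : (n:ℝ) ≠ 0) (hn1 : (n:ℝ) - 1 ≠ 0) (hn2 : (n:ℝ) - 2 ≠ 0)
    (p0 : Event N → ℝ) (hq1 : ∑ E, p0 E = 1) (u : ℝ)
    (π : (Fin N → Fin n) → ℝ) (hπ : IsStationary (transMat N n p0 u) π)
    {i j k : Fin N} (hij : i ≠ j) (hik : i ≠ k) (hjk : j ≠ k) :
    psiq n π i j k = ∑ E, p0 E * (bet u E i * bet u E j * bet u E k
        * psiq n π (extMap E i) (extMap E j) (extMap E k)) := by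
  have h3 := phi3_rec hn p0 u π hπ hij hik hjk
  have h2ij := phi2_rec hn p0 u π hπ hij
  have h2ik := phi2_rec hn p0 u π hπ hik
  have h2jk := phi2_rec hn p0 u π hπ hjk
  have key : ∀ E : Event N, p0 E * (bet u E i * bet u E j * bet u E k
        * psiq n π (extMap E i) (extMap E j) (extMap E k))
      = ((n:ℝ)^2 * (p0 E * (bet u E i * bet u E j * bet u E k
            * phi3 π (extMap E i) (extMap E j) (extMap E k)
          + bet u E i * bet u E j * (1 - bet u E k) / (n:ℝ)
            * phi2 π (extMap E i) (extMap E j)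
          + bet u E i * (1 - bet u E j) * bet u E k / (n:ℝ)
            * phi2 π (extMap E i) (extMap E k)
          + (1 - bet u E i) * bet u E j * bet u E k / (n:ℝ)
            * phi2 π (extMap E j) (extMap E k)
          + (bet u E i * (1 - bet u E j) * (1 - bet u E k)
              + (1 - bet u E i) * bet u E j * (1 - bet u E k)
              + (1 - bet u E i) * (1 - bet u E j) * bet u E k
              + (1 - bet u E i) * (1 - bet u E j) * (1 - bet u E k)) / (n:ℝ)^2))
        - (n:ℝ) * (p0 E * (bet u E i * bet u E j
            * phi2 π (extMap E i) (extMap E j)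
          + (1 - bet u E i * bet u E j) / (n:ℝ)))
        - (n:ℝ) * (p0 E * (bet u E i * bet u E k
            * phi2 π (extMap E i) (extMap E k)
          + (1 - bet u E i * bet u E k) / (n:ℝ)))
        - (n:ℝ) * (p0 E * (bet u E j * bet u E k
            * phi2 π (extMap E j) (extMap E k)
          + (1 - bet u E j * bet u E k) / (n:ℝ)))
        + 2 * p0 E) / (((n:ℝ) - 1) * ((n:ℝ) - 2)) := by
    intro E
    unfold psiq
    field_simp
    ring
  rw [Finset.sum_congr rfl fun E _ => key E, ← Finset.sum_div]
  unfold psiq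
  congr 1
  rw [Finset.sum_add_distrib, Finset.sum_sub_distrib, Finset.sum_sub_distrib,
    Finset.sum_sub_distrib, ← Finset.mul_sum, ← Finset.mul_sum, ← Finset.mul_sum,
    ← Finset.mul_sum, ← Finset.mul_sum, hq1, ← h3, ← h2ij, ← h2ik, ← h2jk]
  ring

lemma foldr_fixed {α : Type*} (l : List (α → α)) (x : α) (h : ∀ f ∈ l, f x = x) :
    l.foldr (· ∘ ·) id x = x := by
  induction l with
  | nil => rfl
  | cons f l ih =>
      simp only [List.foldr_cons, Function.comp_apply]
      rw [ih fun g hg => h g (List.mem_cons_of_mem f hg), h f List.mem_cons_self]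

lemma touch {q : Event N → ℝ} (hfix : FixationAxiom q) :
    ∀ i j : Fin N, i ≠ j → ∃ E, 0 < q E ∧ (i ∈ E.1 ∨ j ∈ E.1) := by
  intro i j hij
  by_contra hc
  push_neg at hc
  obtain ⟨i₀, m, Ev, hm, hpos, -, hall⟩ := hfix
  have hfi : ∀ s : Fin N, s = i ∨ s = j →
      (List.ofFn fun k => extMap (Ev k)).foldr (· ∘ ·) id s = s := by
    intro s hs
    apply foldr_fixed
    intro f hf
    rw [List.mem_ofFn] at hf
    obtain ⟨k, rfl⟩ := hf
    have hmem := hc (Ev k) (hpos k)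
    show (if s ∈ (Ev k).1 then (Ev k).2 s else s) = s
    rcases hs with rfl | rfl
    · rw [if_neg hmem.1]
    · rw [if_neg hmem.2]
  have h1 := hall i
  have h2 := hall j
  rw [hfi i (Or.inl rfl)] at h1
  rw [hfi j (Or.inr rfl)] at h2
  exact hij (h1.trans h2.symm)

lemma maxprin {ι : Type*} [Fintype ι] [Nonempty ι]
    (q : Event N → ℝ) (hq0 : ∀ E, 0 ≤ q E) (hq1 : ∑ E, q E = 1)
    {u : ℝ} (hu0 : 0 < u)
    (d : ι → ℝ) (c : Event N → ι → ℝ) (t : Event N → ι → ι)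
    (good : ι → Prop)
    (hc0 : ∀ E s, 0 ≤ c E s) (hc1 : ∀ E s, c E s ≤ 1)
    (hbad : ∀ s, ¬ good s → d s = 0)
    (hrec : ∀ s, good s → d s = ∑ E, q E * c E s * d (t E s))
    (hdef : ∀ s, good s → ∃ E, 0 < q E ∧ c E s ≤ 1 - u) :
    ∀ s, d s = 0 := by
  obtain ⟨s₀, -, hmax⟩ := Finset.exists_max_image (Finset.univ : Finset ι)
    (fun s => |d s|) ⟨Classical.arbitrary ι, Finset.mem_univ _⟩
  have hK0 : 0 ≤ |d s₀| := abs_nonneg _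
  have hKz : |d s₀| = 0 := by
    by_cases hg : good s₀
    · obtain ⟨E₀, hE0, hcE0⟩ := hdef s₀ hg
      have h1 : |d s₀| ≤ (∑ E, q E * c E s₀) * |d s₀| := by
        conv_lhs => rw [hrec s₀ hg]
        calc |∑ E, q E * c E s₀ * d (t E s₀)|
            ≤ ∑ E, |q E * c E s₀ * d (t E s₀)| := Finset.abs_sum_le_sum_abs _ _
          _ ≤ ∑ E, q E * c E s₀ * |d s₀| := by
              refine Finset.sum_le_sum fun E _ => ?_
              rw [abs_mul, abs_mul, abs_of_nonneg (hq0 E), abs_of_nonneg (hc0 E s₀)]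
              exact mul_le_mul_of_nonneg_left (hmax _ (Finset.mem_univ _))
                (mul_nonneg (hq0 E) (hc0 E s₀))
          _ = (∑ E, q E * c E s₀) * |d s₀| := by rw [Finset.sum_mul]
      have h2 : ∑ E, q E * c E s₀ ≤ 1 - q E₀ * u := by
        have hsplit : ∑ E, q E * c E s₀
            = q E₀ * c E₀ s₀ + ∑ E ∈ Finset.univ.erase E₀, q E * c E s₀ :=
          (Finset.add_sum_erase _ _ (Finset.mem_univ E₀)).symm
        have hb : ∑ E ∈ Finset.univ.erase E₀, q E * c E s₀
            ≤ ∑ E ∈ Finset.univ.erase E₀, q E :=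
          Finset.sum_le_sum fun E _ => mul_le_of_le_one_right (hq0 E) (hc1 E _)
        have hq' : ∑ E ∈ Finset.univ.erase E₀, q E = 1 - q E₀ := by
          have := Finset.add_sum_erase (Finset.univ : Finset (Event N)) q
            (Finset.mem_univ E₀)
          rw [hq1] at this
          linarith
        have hb2 : q E₀ * c E₀ s₀ ≤ q E₀ * (1 - u) :=
          mul_le_mul_of_nonneg_left hcE0 (le_of_lt hE0)
        rw [hsplit]
        calc q E₀ * c E₀ s₀ + ∑ E ∈ Finset.univ.erase E₀, q E * c E s₀
            ≤ q E₀ * (1 - u) + (1 - q E₀) := by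
              have := hb.trans_eq hq'
              linarith
          _ = 1 - q E₀ * u := by ring
      have h3 : |d s₀| ≤ (1 - q E₀ * u) * |d s₀| :=
        h1.trans (mul_le_mul_of_nonneg_right h2 hK0)
      nlinarith [mul_pos hE0 hu0]
    · rw [hbad s₀ hg, abs_zero]
  intro s
  have hs := hmax s (Finset.mem_univ s)
  rw [hKz] at hs
  exact abs_eq_zero.mp (le_antisymm hs (abs_nonneg _))

lemma brack1 {n : ℕ} (hn : (n:ℝ) ≠ 0) (hn1 : (n:ℝ) - 1 ≠ 0) (hn2 : (n:ℝ) - 2 ≠ 0)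
    (u : ℝ) (π : (Fin N → Fin n) → ℝ) (i j k l : Fin N) :
    (-(n:ℝ)^2 * phi3 π i k l + (n:ℝ)^2 * (1-u) * phi3 π j k l
      + (n:ℝ) * phi2 π i k + (n:ℝ) * phi2 π i l
      - (n:ℝ) * (1-u) * phi2 π j k - (n:ℝ) * (1-u) * phi2 π j l
      + (n:ℝ) * u * phi2 π k l - 2*u) / (((n:ℝ) - 1) * ((n:ℝ) - 2))
    = -(psiq n π i k l) + (1-u) * psiq n π j k l := by
  unfold psiq
  field_simp
  ring

lemma brack2 {n : ℕ} (hn : (n:ℝ) ≠ 0) (hn1 : (n:ℝ) - 1 ≠ 0) (hn2 : (n:ℝ) - 2 ≠ 0)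
    (u : ℝ) (π : (Fin N → Fin n) → ℝ) (i j k l : Fin N) :
    (-(n:ℝ)^2 * phi3 π i k l + (n:ℝ)^2 * (1-u) * phi3 π j k l
      + (n:ℝ) * phi2 π i k + (n:ℝ) * ((n:ℝ) - 1) * phi2 π i l
      - (n:ℝ) * (1-u) * phi2 π j k - (n:ℝ) * ((n:ℝ) - 1) * (1-u) * phi2 π j l
      + (n:ℝ) * u * phi2 π k l - (n:ℝ) * u) / (((n:ℝ) - 1) * ((n:ℝ) - 2))
    = gq n π i l - (1-u) * gq n π j l - psiq n π i k l + (1-u) * psiq n π j k l := by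
  unfold psiq gq
  field_simp
  ring

lemma brack3 {n : ℕ} (hn : (n:ℝ) ≠ 0) (hn1 : (n:ℝ) - 1 ≠ 0) (hn2 : (n:ℝ) - 2 ≠ 0)
    (u : ℝ) (π : (Fin N → Fin n) → ℝ) (i j k l : Fin N) :
    (2 * (n:ℝ)^2 * phi3 π i k l - 2 * (n:ℝ)^2 * (1-u) * phi3 π j k l
      - (n:ℝ)^2 * phi2 π i k - (n:ℝ)^2 * phi2 π i l
      + (n:ℝ)^2 * (1-u) * phi2 π j k + (n:ℝ)^2 * (1-u) * phi2 π j l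
      - 2 * (n:ℝ) * u * phi2 π k l + 2 * (n:ℝ) * u) / (((n:ℝ) - 1) * ((n:ℝ) - 2))
    = -(gq n π i k) - gq n π i l + (1-u) * gq n π j k + (1-u) * gq n π j l
      + 2 * psiq n π i k l - 2 * (1-u) * psiq n π j k l := by
  unfold psiq gq
  field_simp
  ring

end Aux

/-- the structure coefficients `λ̃₁`, `λ̃₂`, `λ̃₃` do not depend on
the number `n ≥ 3` of strategies. -/
theorem stmt7 (N : ℕ) (hN : 1 ≤ N)
    (p : (Fin N → ℝ) → Event N → ℝ)
    (hpdist : ∀ F : Fin N → ℝ, (∀ i, 0 < F i) → IsDist (p F))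
    (hpdiff : ∀ (E : Event N) (F : Fin N → ℝ), (∀ i, 0 < F i) →
      DifferentiableAt ℝ (fun G => p G E) F)
    (hfix : FixationAxiom (p (fun _ => (1:ℝ))))
    (u : ℝ) (hu0 : 0 < u) (hu1 : u ≤ 1)
    (hd : ∀ i, 0 < d0 p i)
    (ω : Fin N → Fin N → ℝ)
    (πn : (n : ℕ) → (Fin N → Fin n) → ℝ)
    (hpis : ∀ n : ℕ, 3 ≤ n →
      IsStationary (transMat N n (p (fun _ => (1:ℝ))) u) (πn n) ∧
      ∀ π', IsStationary (transMat N n (p (fun _ => (1:ℝ))) u) π' → π' = πn n) :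
    ∀ n n' : ℕ, 3 ≤ n → 3 ≤ n' →
      lamT1 n p u ω (phi2 (πn n)) (phi3 (πn n)) =
        lamT1 n' p u ω (phi2 (πn n')) (phi3 (πn n')) ∧
      lamT2 n p u ω (phi2 (πn n)) (phi3 (πn n)) =
        lamT2 n' p u ω (phi2 (πn n')) (phi3 (πn n')) ∧
      lamT3 n p u ω (phi2 (πn n)) (phi3 (πn n)) =
        lamT3 n' p u ω (phi2 (πn n')) (phi3 (πn n')) := by
  intro n n' hn3 hn3'
  have hq : IsDist (p fun _ => (1:ℝ)) := hpdist _ fun _ => one_pos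
  have hq0 := hq.1
  have hq1 := hq.2
  have hu0' : (0:ℝ) ≤ u := le_of_lt hu0
  have hfacts : ∀ m : ℕ, 3 ≤ m → ((m:ℝ) ≠ 0 ∧ (m:ℝ) - 1 ≠ 0 ∧ (m:ℝ) - 2 ≠ 0) := by
    intro m hm
    have h3 : (3:ℝ) ≤ (m:ℝ) := by exact_mod_cast hm
    refine ⟨by linarith, by linarith, by linarith⟩
  obtain ⟨hn0, hn1, hn2⟩ := hfacts n hn3
  obtain ⟨hn0', hn1', hn2'⟩ := hfacts n' hn3'
  have hπ := (hpis n hn3).1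
  have hπ' := (hpis n' hn3').1
  have hπ1 : ∑ x, πn n x = 1 := hπ.1.2
  have hπ1' : ∑ x, πn n' x = 1 := hπ'.1.2
  haveI : Nonempty (Fin N) := ⟨⟨0, hN⟩⟩
  have hg : ∀ i j : Fin N, gq n (πn n) i j = gq n' (πn n') i j := by
    have hzero := maxprin (ι := Fin N × Fin N) (p fun _ => (1:ℝ)) hq0 hq1 hu0
      (fun s => gq n (πn n) s.1 s.2 - gq n' (πn n') s.1 s.2)
      (fun E s => bet u E s.1 * bet u E s.2)
      (fun E s => (extMap E s.1, extMap E s.2))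
      (fun s => s.1 ≠ s.2)
      (fun E s => mul_nonneg (bet_nonneg hu1 E s.1) (bet_nonneg hu1 E s.2))
      (fun E s => mul_le_one₀ (bet_le_one hu0' E s.1) (bet_nonneg hu1 E s.2)
        (bet_le_one hu0' E s.2))
      (by
        rintro ⟨i, j⟩ hs
        simp only [ne_eq, not_not] at hs
        subst hs
        simp only
        rw [gq_self hn1 hπ1 i, gq_self hn1' hπ1' i, sub_self])
      (by
        rintro ⟨i, j⟩ hs
        simp only [ne_eq] at hs
        simp only
        rw [gq_rec hn0 hn1 _ hq1 u _ hπ hs, gq_rec hn0' hn1' _ hq1 u _ hπ' hs,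
          ← Finset.sum_sub_distrib]
        exact Finset.sum_congr rfl fun E _ => by ring)
      (by
        rintro ⟨i, j⟩ hs
        simp only [ne_eq] at hs
        obtain ⟨E, hE, hmem⟩ := touch hfix i j hs
        exact ⟨E, hE, bet_pair_le hu0' hu1 hmem⟩)
    intro i j
    have := hzero (i, j)
    simp only at this
    linarith
  have hψ : ∀ i j k : Fin N, psiq n (πn n) i j k = psiq n' (πn n') i j k := by
    have hzero := maxprin (ι := Fin N × Fin N × Fin N) (p fun _ => (1:ℝ)) hq0 hq1 hu0
      (fun s => psiq n (πn n) s.1 s.2.1 s.2.2 - psiq n' (πn n') s.1 s.2.1 s.2.2)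
      (fun E s => bet u E s.1 * bet u E s.2.1 * bet u E s.2.2)
      (fun E s => (extMap E s.1, extMap E s.2.1, extMap E s.2.2))
      (fun s => s.1 ≠ s.2.1 ∧ s.1 ≠ s.2.2 ∧ s.2.1 ≠ s.2.2)
      (fun E s => mul_nonneg (mul_nonneg (bet_nonneg hu1 E s.1)
        (bet_nonneg hu1 E s.2.1)) (bet_nonneg hu1 E s.2.2))
      (fun E s => mul_le_one₀ (mul_le_one₀ (bet_le_one hu0' E s.1)
        (bet_nonneg hu1 E s.2.1) (bet_le_one hu0' E s.2.1))
        (bet_nonneg hu1 E s.2.2) (bet_le_one hu0' E s.2.2))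
      (by
        rintro ⟨i, j, k⟩ hs
        simp only
        by_cases h1 : i = j
        · subst h1
          rw [psiq_ii hn1 hn2 hπ1, psiq_ii hn1' hn2' hπ1', hg, sub_self]
        · by_cases h2 : i = k
          · subst h2
            rw [psiq_iji hn1 hn2 hπ1, psiq_iji hn1' hn2' hπ1', hg, sub_self]
          · by_cases h3 : j = k
            · subst h3
              rw [psiq_jj hn1 hn2 hπ1, psiq_jj hn1' hn2' hπ1', hg, sub_self]
            · exact absurd ⟨h1, h2, h3⟩ hs)
      (by
        rintro ⟨i, j, k⟩ hs
        obtain ⟨h1, h2, h3⟩ := hs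
        simp only
        rw [psiq_rec hn0 hn1 hn2 _ hq1 u _ hπ h1 h2 h3,
          psiq_rec hn0' hn1' hn2' _ hq1 u _ hπ' h1 h2 h3,
          ← Finset.sum_sub_distrib]
        exact Finset.sum_congr rfl fun E _ => by ring)
      (by
        rintro ⟨i, j, k⟩ hs
        obtain ⟨E, hE, hmem⟩ := touch hfix i j hs.1
        exact ⟨E, hE, bet_triple_le hu0' hu1 hmem⟩)
    intro i j k
    have := hzero (i, j, k)
    simp only at this
    linarith
  refine ⟨?_, ?_, ?_⟩
  · have L : ∀ (m : ℕ), (m:ℝ) ≠ 0 → (m:ℝ) - 1 ≠ 0 → (m:ℝ) - 2 ≠ 0 →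
        ∀ π : (Fin N → Fin m) → ℝ,
        lamT1 m p u ω (phi2 π) (phi3 π)
          = ∑ i, ∑ j, ∑ k, vstar p u i * mCoef p k j i *
              ∑ l, ω k l * (-(psiq m π i k l) + (1-u) * psiq m π j k l) := by
      intro m hm0 hm1 hm2 π
      unfold lamT1
      refine Finset.sum_congr rfl fun i _ => Finset.sum_congr rfl fun j _ =>
        Finset.sum_congr rfl fun k _ => ?_
      refine congrArg (fun z => vstar p u i * mCoef p k j i * z)
        (Finset.sum_congr rfl fun l _ => ?_)
      exact congrArg (fun z => ω k l * z) (brack1 hm0 hm1 hm2 u π i j k l)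
    rw [L n hn0 hn1 hn2 (πn n), L n' hn0' hn1' hn2' (πn n')]
    refine Finset.sum_congr rfl fun i _ => Finset.sum_congr rfl fun j _ =>
      Finset.sum_congr rfl fun k _ => ?_
    refine congrArg (fun z => vstar p u i * mCoef p k j i * z)
      (Finset.sum_congr rfl fun l _ => ?_)
    rw [hψ i k l, hψ j k l]
  · have L : ∀ (m : ℕ), (m:ℝ) ≠ 0 → (m:ℝ) - 1 ≠ 0 → (m:ℝ) - 2 ≠ 0 →
        ∀ π : (Fin N → Fin m) → ℝ,
        lamT2 m p u ω (phi2 π) (phi3 π)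
          = ∑ i, ∑ j, ∑ k, vstar p u i * mCoef p k j i *
              ∑ l, ω k l * (gq m π i l - (1-u) * gq m π j l
                - psiq m π i k l + (1-u) * psiq m π j k l) := by
      intro m hm0 hm1 hm2 π
      unfold lamT2
      refine Finset.sum_congr rfl fun i _ => Finset.sum_congr rfl fun j _ =>
        Finset.sum_congr rfl fun k _ => ?_
      refine congrArg (fun z => vstar p u i * mCoef p k j i * z)
        (Finset.sum_congr rfl fun l _ => ?_)
      exact congrArg (fun z => ω k l * z) (brack2 hm0 hm1 hm2 u π i j k l)
    rw [L n hn0 hn1 hn2 (πn n), L n' hn0' hn1' hn2' (πn n')]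
    refine Finset.sum_congr rfl fun i _ => Finset.sum_congr rfl fun j _ =>
      Finset.sum_congr rfl fun k _ => ?_
    refine congrArg (fun z => vstar p u i * mCoef p k j i * z)
      (Finset.sum_congr rfl fun l _ => ?_)
    rw [hψ i k l, hψ j k l, hg i l, hg j l]
  · have L : ∀ (m : ℕ), (m:ℝ) ≠ 0 → (m:ℝ) - 1 ≠ 0 → (m:ℝ) - 2 ≠ 0 →
        ∀ π : (Fin N → Fin m) → ℝ,
        lamT3 m p u ω (phi2 π) (phi3 π)
          = ∑ i, ∑ j, ∑ k, vstar p u i * mCoef p k j i *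
              ∑ l, ω k l * (-(gq m π i k) - gq m π i l + (1-u) * gq m π j k
                + (1-u) * gq m π j l + 2 * psiq m π i k l
                - 2 * (1-u) * psiq m π j k l) := by
      intro m hm0 hm1 hm2 π
      unfold lamT3
      refine Finset.sum_congr rfl fun i _ => Finset.sum_congr rfl fun j _ =>
        Finset.sum_congr rfl fun k _ => ?_
      refine congrArg (fun z => vstar p u i * mCoef p k j i * z)
        (Finset.sum_congr rfl fun l _ => ?_)
      exact congrArg (fun z => ω k l * z) (brack3 hm0 hm1 hm2 u π i j k l)
    rw [L n hn0 hn1 hn2 (πn n), L n' hn0' hn1' hn2' (πn n')]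
    refine Finset.sum_congr rfl fun i _ => Finset.sum_congr rfl fun j _ =>
      Finset.sum_congr rfl fun k _ => ?_
    refine congrArg (fun z => vstar p u i * mCoef p k j i * z)
      (Finset.sum_congr rfl fun l _ => ?_)
    rw [hψ i k l, hψ j k l, hg i k, hg i l, hg j k, hg j l]


end SCT
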